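/- arXiv:2604.06780 — 2 statements merged into one kernel-verified Lean document; each statement's English description precedes it below -/
import Mathlib

section
/- Let B ⊂ ℝⁿ be a ball and M : B → ℝ^{n×n} a.e. symmetric positive definite with |M(x)||M(x)⁻¹| ≤ Λ a.e. Define (M)^{log}_B = exp(⨍_B log M(x) dx), using matrix exponential and logarithm. Then (M)^{log}_B is symmetric positive definite and for every ξ ∈ ℝⁿ, Λ⁻¹ |(M)^{log}_B| |ξ| ≤ |(M)^{log}_B ξ| ≤ |(M)^{log}_B| |ξ|. -/
open Set MeasureTheory Metric
open scoped RealInnerProductSpace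

section helpers
variable {n : ℕ}
local notation "E" => EuclideanSpace ℝ (Fin n)

lemma exp_apply_eigen (T : E →L[ℝ] E) (c : ℝ) (u : E) (h : T u = c • u) :
    NormedSpace.exp T u = Real.exp c • u := by
  have hk : ∀ k : ℕ, (T ^ k) u = c ^ k • u := by
    intro k
    induction k with
    | zero => simp
    | succ k ih =>
      rw [pow_succ, ContinuousLinearMap.mul_apply, h, _root_.map_smul, ih, smul_smul, pow_succ,
        mul_comm]
  have hs : Summable (fun k : ℕ => ((k.factorial : ℝ)⁻¹) • T ^ k) :=
    NormedSpace.expSeries_summable' T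
  have hs2 : Summable (fun k : ℕ => ((k.factorial : ℝ)⁻¹) * c ^ k) := by
    simpa [smul_eq_mul] using NormedSpace.expSeries_summable' (𝕂 := ℝ) c
  calc NormedSpace.exp T u
      = (∑' k : ℕ, ((k.factorial : ℝ)⁻¹) • T ^ k) u := by rw [NormedSpace.exp_eq_tsum (𝕂 := ℝ)]
    _ = ∑' k : ℕ, (((k.factorial : ℝ)⁻¹) • T ^ k) u :=
        ((ContinuousLinearMap.apply ℝ _ u).map_tsum hs)
    _ = ∑' k : ℕ, (((k.factorial : ℝ)⁻¹) * c ^ k) • u := by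
        refine tsum_congr fun k => ?_
        rw [ContinuousLinearMap.smul_apply, hk, smul_smul]
    _ = (∑' k : ℕ, ((k.factorial : ℝ)⁻¹) * c ^ k) • u := hs2.tsum_smul_const u
    _ = Real.exp c • u := by
        congr 1
        rw [Real.exp_eq_exp_ℝ, NormedSpace.exp_eq_tsum (𝕂 := ℝ)]
        simp [smul_eq_mul]

lemma inner_eq_sum (b : OrthonormalBasis (Fin n) ℝ (EuclideanSpace ℝ (Fin n))) (x y : E) :
    ⟪x, y⟫ = ∑ i, b.repr x i * b.repr y i := by
  calc ⟪x, y⟫ = ⟪b.repr x, b.repr y⟫ := (b.repr.inner_map_map x y).symm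
    _ = ∑ i, b.repr x i * b.repr y i := by
        rw [PiLp.inner_apply]
        simp only [RCLike.inner_apply, starRingEnd_apply, star_trivial]
        exact Finset.sum_congr rfl fun i _ => mul_comm _ _

lemma exp_eigen_sum (T : E →L[ℝ] E) (b : OrthonormalBasis (Fin n) ℝ (EuclideanSpace ℝ (Fin n)))
    (μ : Fin n → ℝ) (hexpb : ∀ i, NormedSpace.exp T (b i) = Real.exp (μ i) • b i) (v : E) :
    NormedSpace.exp T v = ∑ j, (Real.exp (μ j) * b.repr v j) • b j := by
  conv_lhs => rw [← b.sum_repr v]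
  rw [map_sum]
  refine Finset.sum_congr rfl fun j _ => ?_
  rw [_root_.map_smul, hexpb, smul_smul, mul_comm]

lemma repr_exp_apply (T : E →L[ℝ] E) (b : OrthonormalBasis (Fin n) ℝ (EuclideanSpace ℝ (Fin n)))
    (μ : Fin n → ℝ) (hexpb : ∀ i, NormedSpace.exp T (b i) = Real.exp (μ i) • b i) (v : E)
    (i : Fin n) :
    b.repr (NormedSpace.exp T v) i = Real.exp (μ i) * b.repr v i := by
  classical
  rw [exp_eigen_sum T b μ hexpb v, map_sum]
  simp_rw [_root_.map_smul, b.repr_self]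
  rw [WithLp.ofLp_sum, Finset.sum_apply]
  simp [EuclideanSpace.single_apply]

lemma exp_quad_le (T : E →L[ℝ] E) (hT : ∀ u v : E, ⟪T u, v⟫ = ⟪u, T v⟫) (u : E)
    (hu : ‖u‖ = 1) : Real.exp ⟪T u, u⟫ ≤ ‖NormedSpace.exp T‖ := by
  have hT' : (↑T : E →ₗ[ℝ] E).IsSymmetric := fun x y => hT x y
  have hn : Module.finrank ℝ (EuclideanSpace ℝ (Fin n)) = n :=
    finrank_euclideanSpace_fin
  set b := hT'.eigenvectorBasis hn with hbdef
  set μ := hT'.eigenvalues hn with hμdef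
  have hb : ∀ i, T (b i) = μ i • b i := fun i => hT'.apply_eigenvectorBasis hn i
  have hexpb : ∀ i, NormedSpace.exp T (b i) = Real.exp (μ i) • b i := fun i =>
    exp_apply_eigen T (μ i) _ (hb i)
  set w : Fin n → ℝ := fun i => (b.repr u i) ^ 2 with hwdef
  have hw1 : ∑ i, w i = 1 := by
    have h1 := inner_eq_sum b u u
    rw [real_inner_self_eq_norm_sq, hu] at h1
    simpa [hwdef, sq] using h1.symm
  have hq : ⟪T u, u⟫ = ∑ i, w i • μ i := by
    rw [inner_eq_sum b (T u) u]
    refine Finset.sum_congr rfl fun i _ => ?_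
    have h2 := hT'.eigenvectorBasis_apply_self_apply hn u i
    rw [show (↑T : E →ₗ[ℝ] E) u = T u from rfl] at h2
    rw [h2, hwdef]
    simp [smul_eq_mul]; ring
  have jensen : Real.exp (∑ i, w i • μ i) ≤ ∑ i, w i • Real.exp (μ i) :=
    convexOn_exp.map_sum_le (fun i _ => sq_nonneg _) hw1 (fun i _ => Set.mem_univ _)
  have hsum : ∑ i, w i • Real.exp (μ i) = ⟪NormedSpace.exp T u, u⟫ := by
    rw [inner_eq_sum b (NormedSpace.exp T u) u]
    refine Finset.sum_congr rfl fun i _ => ?_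
    rw [repr_exp_apply T b μ hexpb u i, hwdef]
    simp [smul_eq_mul]; ring
  calc Real.exp ⟪T u, u⟫ = Real.exp (∑ i, w i • μ i) := by rw [hq]
    _ ≤ ∑ i, w i • Real.exp (μ i) := jensen
    _ = ⟪NormedSpace.exp T u, u⟫ := hsum
    _ ≤ ‖NormedSpace.exp T u‖ * ‖u‖ := real_inner_le_norm _ _
    _ ≤ (‖NormedSpace.exp T‖ * ‖u‖) * ‖u‖ := by
        gcongr; exact (NormedSpace.exp T).le_opNorm u
    _ = ‖NormedSpace.exp T‖ := by rw [hu]; ring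

end helpers

/-- Let `M : B → ℝ^{n×n}` be a.e. (here: everywhere on the ball `B`)
symmetric positive definite with `‖M(x)‖ ‖M(x)⁻¹‖ ≤ Λ`, let `L = log M` be its matrix
logarithm, and define the logarithmic average `(M)^{log}_B = exp(⨍_B log M)`.
Then `(M)^{log}_B` is symmetric positive definite and for every `ξ`,
`Λ⁻¹ ‖(M)^{log}_B‖ ‖ξ‖ ≤ ‖(M)^{log}_B ξ‖ ≤ ‖(M)^{log}_B‖ ‖ξ‖`. -/
theorem stmt6 (n : ℕ) (x₀ : EuclideanSpace ℝ (Fin n)) (r : ℝ) (hr : 0 < r) (Λ : ℝ)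
    (M Minv L : EuclideanSpace ℝ (Fin n) →
      (EuclideanSpace ℝ (Fin n) →L[ℝ] EuclideanSpace ℝ (Fin n)))
    (hMsymm : ∀ x ∈ ball x₀ r, ∀ u v, ⟪M x u, v⟫ = ⟪u, M x v⟫)
    (hMpd : ∀ x ∈ ball x₀ r, ∀ u, u ≠ 0 → 0 < ⟪M x u, u⟫)
    (hinv : ∀ x ∈ ball x₀ r,
      (M x).comp (Minv x) = ContinuousLinearMap.id ℝ (EuclideanSpace ℝ (Fin n)) ∧
      (Minv x).comp (M x) = ContinuousLinearMap.id ℝ (EuclideanSpace ℝ (Fin n)))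
    (hΛ : ∀ x ∈ ball x₀ r, ‖M x‖ * ‖Minv x‖ ≤ Λ)
    (hLsymm : ∀ x ∈ ball x₀ r, ∀ u v, ⟪L x u, v⟫ = ⟪u, L x v⟫)
    (hexp : ∀ x ∈ ball x₀ r, NormedSpace.exp (L x) = M x)
    (hLint : IntegrableOn L (ball x₀ r)) :
    (∀ u v, ⟪(NormedSpace.exp (⨍ x in ball x₀ r, L x)) u, v⟫ =
        ⟪u, (NormedSpace.exp (⨍ x in ball x₀ r, L x)) v⟫) ∧
    (∀ u, u ≠ 0 → 0 < ⟪(NormedSpace.exp (⨍ x in ball x₀ r, L x)) u, u⟫) ∧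
    (∀ ξ : EuclideanSpace ℝ (Fin n),
      Λ⁻¹ * ‖NormedSpace.exp (⨍ x in ball x₀ r, L x)‖ * ‖ξ‖ ≤
        ‖(NormedSpace.exp (⨍ x in ball x₀ r, L x)) ξ‖ ∧
      ‖(NormedSpace.exp (⨍ x in ball x₀ r, L x)) ξ‖ ≤
        ‖NormedSpace.exp (⨍ x in ball x₀ r, L x)‖ * ‖ξ‖) := by

  classical
  rcases Nat.eq_zero_or_pos n with h0 | hpos
  · subst h0
    haveI : Subsingleton (EuclideanSpace ℝ (Fin 0)) := ⟨fun a b => PiLp.ext fun i => i.elim0⟩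
    have hz : ∀ z : EuclideanSpace ℝ (Fin 0), z = 0 := fun z => Subsingleton.elim z 0
    refine ⟨fun u v => by rw [hz u, hz v, inner_zero_right, inner_zero_left],
      fun u hu => absurd (hz u) hu, fun ξ => ?_⟩
    constructor
    · rw [hz ξ, norm_zero, mul_zero, map_zero, norm_zero]
    · rw [hz ξ, norm_zero, mul_zero, map_zero, norm_zero]
  haveI : Nonempty (Fin n) := ⟨⟨0, hpos⟩⟩
  set A := ⨍ x in ball x₀ r, L x with hAdef
  set c := (volume (ball x₀ r)).toReal with hcdef
  have hx₀ : x₀ ∈ ball x₀ r := mem_ball_self hr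
  have hc : 0 < c := by
    rw [hcdef]
    exact ENNReal.toReal_pos (measure_ball_pos volume x₀ hr).ne' measure_ball_lt_top.ne
  have hintv : ∀ v : EuclideanSpace ℝ (Fin n),
      Integrable (fun x => L x v) (volume.restrict (ball x₀ r)) := fun v =>
    (ContinuousLinearMap.apply ℝ (EuclideanSpace ℝ (Fin n)) v).integrable_comp hLint
  have hintq : ∀ v : EuclideanSpace ℝ (Fin n),
      Integrable (fun x => ⟪L x v, v⟫) (volume.restrict (ball x₀ r)) := by
    intro v
    have h := (innerSL ℝ v).integrable_comp (hintv v)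
    refine h.congr (Filter.Eventually.of_forall fun x => ?_)
    simp only [innerSL_apply_apply]
    exact real_inner_comm _ _
  have hAu : ∀ u, A u = c⁻¹ • ∫ x in ball x₀ r, L x u := by
    intro u
    rw [hAdef, setAverage_eq, ContinuousLinearMap.smul_apply,
      ContinuousLinearMap.integral_apply hLint]
    rfl
  have hAinner : ∀ u v, ⟪A u, v⟫ = c⁻¹ * ∫ x in ball x₀ r, ⟪L x u, v⟫ := by
    intro u v
    rw [hAu u, real_inner_smul_left]
    congr 1
    rw [real_inner_comm, ← integral_inner (hintv u)]
    exact integral_congr_ae (Filter.Eventually.of_forall fun x => real_inner_comm _ _)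
  have hAsymm : ∀ u v, ⟪A u, v⟫ = ⟪u, A v⟫ := by
    intro u v
    rw [hAinner u v, real_inner_comm (A v) u, hAinner v u]
    congr 1
    refine setIntegral_congr_fun measurableSet_ball fun x hx => ?_
    rw [hLsymm x hx u v, real_inner_comm]
  -- eigen decomposition of A
  have hA' : (↑A : EuclideanSpace ℝ (Fin n) →ₗ[ℝ] EuclideanSpace ℝ (Fin n)).IsSymmetric :=
    fun x y => hAsymm x y
  have hn : Module.finrank ℝ (EuclideanSpace ℝ (Fin n)) = n :=
    finrank_euclideanSpace_fin
  set b := hA'.eigenvectorBasis hn with hbdef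
  set μ := hA'.eigenvalues hn with hμdef
  have hb : ∀ i, A (b i) = μ i • b i := fun i => hA'.apply_eigenvectorBasis hn i
  have hPb : ∀ i, NormedSpace.exp A (b i) = Real.exp (μ i) • b i := fun i =>
    exp_apply_eigen A (μ i) _ (hb i)
  have hrepr : ∀ v i, b.repr (NormedSpace.exp A v) i = Real.exp (μ i) * b.repr v i :=
    repr_exp_apply A b μ hPb
  have hbnorm : ∀ i, ‖b i‖ = 1 := fun i => b.orthonormal.1 i
  refine ⟨?_, ?_, ?_⟩
  · intro u v
    rw [inner_eq_sum b (NormedSpace.exp A u) v, inner_eq_sum b u (NormedSpace.exp A v)]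
    refine Finset.sum_congr rfl fun i _ => ?_
    rw [hrepr u i, hrepr v i]
    ring
  · intro u hu
    rw [inner_eq_sum b (NormedSpace.exp A u) u]
    have hex : ∃ i, b.repr u i ≠ 0 := by
      by_contra hcon
      push_neg at hcon
      apply hu
      apply b.repr.map_eq_zero_iff.mp
      ext i
      exact hcon i
    obtain ⟨i, hi⟩ := hex
    refine Finset.sum_pos' (fun j _ => ?_) ⟨i, Finset.mem_univ i, ?_⟩
    · rw [hrepr u j]
      have h5 : Real.exp (μ j) * b.repr u j * b.repr u j
          = Real.exp (μ j) * (b.repr u j) ^ 2 := by ring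
      rw [h5]
      positivity
    · rw [hrepr u i, mul_assoc]
      exact mul_pos (Real.exp_pos _) (mul_self_pos.mpr hi)
  · -- norm estimates
    obtain ⟨i0, hi0⟩ := Finite.exists_max μ
    obtain ⟨i1, hi1⟩ := Finite.exists_min μ
    set P := NormedSpace.exp A with hPdef
    have hnormsq : ∀ v : EuclideanSpace ℝ (Fin n), ‖v‖ ^ 2 = ∑ i, (b.repr v i) ^ 2 := by
      intro v
      rw [← real_inner_self_eq_norm_sq, inner_eq_sum b v v]
      simp [sq]
    have hub : ∀ ξ, ‖P ξ‖ ≤ Real.exp (μ i0) * ‖ξ‖ := by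
      intro ξ
      have h2 : ‖P ξ‖ ^ 2 ≤ (Real.exp (μ i0) * ‖ξ‖) ^ 2 := by
        rw [hnormsq (P ξ), mul_pow, hnormsq ξ, Finset.mul_sum]
        refine Finset.sum_le_sum fun i _ => ?_
        rw [hrepr ξ i, mul_pow]
        have h3 : Real.exp (μ i) ^ 2 ≤ Real.exp (μ i0) ^ 2 :=
          pow_le_pow_left₀ (Real.exp_pos _).le (Real.exp_le_exp.mpr (hi0 i)) 2
        exact mul_le_mul_of_nonneg_right h3 (sq_nonneg _)
      have h4 := Real.sqrt_le_sqrt h2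
      rwa [Real.sqrt_sq (norm_nonneg _), Real.sqrt_sq (by positivity)] at h4
    have hlb : ∀ ξ, Real.exp (μ i1) * ‖ξ‖ ≤ ‖P ξ‖ := by
      intro ξ
      have h2 : (Real.exp (μ i1) * ‖ξ‖) ^ 2 ≤ ‖P ξ‖ ^ 2 := by
        rw [hnormsq (P ξ), mul_pow, hnormsq ξ, Finset.mul_sum]
        refine Finset.sum_le_sum fun i _ => ?_
        rw [hrepr ξ i, mul_pow]
        have h3 : Real.exp (μ i1) ^ 2 ≤ Real.exp (μ i) ^ 2 :=
          pow_le_pow_left₀ (Real.exp_pos _).le (Real.exp_le_exp.mpr (hi1 i)) 2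
        exact mul_le_mul_of_nonneg_right h3 (sq_nonneg _)
      have h4 := Real.sqrt_le_sqrt h2
      rwa [Real.sqrt_sq (by positivity), Real.sqrt_sq (norm_nonneg _)] at h4
    have hPnorm : ‖P‖ = Real.exp (μ i0) := by
      refine le_antisymm (P.opNorm_le_bound (Real.exp_pos _).le hub) ?_
      have h1 : ‖P (b i0)‖ = Real.exp (μ i0) := by
        rw [hPb i0, norm_smul, hbnorm i0, Real.norm_eq_abs, abs_of_pos (Real.exp_pos _), mul_one]
      calc Real.exp (μ i0) = ‖P (b i0)‖ := h1.symm
        _ ≤ ‖P‖ * ‖b i0‖ := P.le_opNorm _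
        _ = ‖P‖ := by rw [hbnorm i0, mul_one]
    have hpt : ∀ x ∈ ball x₀ r, ∀ u w : EuclideanSpace ℝ (Fin n), ‖u‖ = 1 → ‖w‖ = 1 →
        Real.exp (⟪L x u, u⟫ - ⟪L x w, w⟫) ≤ Λ := by
      intro x hx u w hu hw
      have h1 : Real.exp ⟪L x u, u⟫ ≤ ‖M x‖ := by
        rw [← hexp x hx]
        exact exp_quad_le _ (hLsymm x hx) u hu
      have hMinv : Minv x = NormedSpace.exp (-(L x)) := by
        have e1 : NormedSpace.exp (-(L x)) * NormedSpace.exp (L x) = 1 := by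
          rw [← NormedSpace.exp_add_of_commute_of_mem_ball (𝕂 := ℝ) ((Commute.refl (L x)).neg_left)
              ((NormedSpace.expSeries_radius_eq_top ℝ
                (EuclideanSpace ℝ (Fin n) →L[ℝ] EuclideanSpace ℝ (Fin n))).symm ▸ edist_lt_top _ _)
              ((NormedSpace.expSeries_radius_eq_top ℝ
                (EuclideanSpace ℝ (Fin n) →L[ℝ] EuclideanSpace ℝ (Fin n))).symm ▸ edist_lt_top _ _), neg_add_cancel,
            NormedSpace.exp_zero]
        have e2 : (M x) * (Minv x) = 1 := (hinv x hx).1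
        calc Minv x = 1 * Minv x := (one_mul _).symm
          _ = (NormedSpace.exp (-(L x)) * NormedSpace.exp (L x)) * Minv x := by rw [e1]
          _ = NormedSpace.exp (-(L x)) * ((M x) * Minv x) := by rw [mul_assoc, hexp x hx]
          _ = NormedSpace.exp (-(L x)) := by rw [e2, mul_one]
      have h2 : Real.exp (-⟪L x w, w⟫) ≤ ‖Minv x‖ := by
        rw [hMinv]
        have hsym : ∀ a b' : EuclideanSpace ℝ (Fin n),
            ⟪(-(L x)) a, b'⟫ = ⟪a, (-(L x)) b'⟫ := by
          intro a b'
          simp only [ContinuousLinearMap.neg_apply, inner_neg_left, inner_neg_right]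
          rw [hLsymm x hx a b']
        have h6 := exp_quad_le (-(L x)) hsym w hw
        simpa using h6
      calc Real.exp (⟪L x u, u⟫ - ⟪L x w, w⟫)
          = Real.exp ⟪L x u, u⟫ * Real.exp (-⟪L x w, w⟫) := by
            rw [← Real.exp_add, sub_eq_add_neg]
        _ ≤ ‖M x‖ * ‖Minv x‖ := mul_le_mul h1 h2 (Real.exp_pos _).le (norm_nonneg _)
        _ ≤ Λ := hΛ x hx
    have hΛpos : 0 < Λ :=
      lt_of_lt_of_le (Real.exp_pos _) (hpt x₀ hx₀ (b i0) (b i0) (hbnorm i0) (hbnorm i0))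
    have hμinner : ∀ i, μ i = c⁻¹ * ∫ x in ball x₀ r, ⟪L x (b i), b i⟫ := by
      intro i
      have h7 : ⟪A (b i), b i⟫ = μ i := by
        rw [hb i, real_inner_smul_left, real_inner_self_eq_norm_sq, hbnorm i]
        ring
      rw [← h7, hAinner]
    have hgaplog : μ i0 - μ i1 ≤ Real.log Λ := by
      rw [hμinner i0, hμinner i1, ← mul_sub, ← integral_sub (hintq (b i0)) (hintq (b i1))]
      have hle : (∫ x in ball x₀ r, (⟪L x (b i0), b i0⟫ - ⟪L x (b i1), b i1⟫))
          ≤ Real.log Λ * c := by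
        calc (∫ x in ball x₀ r, (⟪L x (b i0), b i0⟫ - ⟪L x (b i1), b i1⟫))
            ≤ ∫ _x in ball x₀ r, Real.log Λ := by
              refine setIntegral_mono_on ((hintq (b i0)).sub (hintq (b i1)))
                (integrableOn_const measure_ball_lt_top.ne) measurableSet_ball ?_
              intro x hx
              have h := hpt x hx (b i0) (b i1) (hbnorm i0) (hbnorm i1)
              calc ⟪L x (b i0), b i0⟫ - ⟪L x (b i1), b i1⟫
                  = Real.log (Real.exp (⟪L x (b i0), b i0⟫ - ⟪L x (b i1), b i1⟫)) :=
                    (Real.log_exp _).symm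
                _ ≤ Real.log Λ := Real.log_le_log (Real.exp_pos _) h
          _ = Real.log Λ * c := by rw [setIntegral_const, smul_eq_mul, mul_comm]; rfl
      calc c⁻¹ * (∫ x in ball x₀ r, (⟪L x (b i0), b i0⟫ - ⟪L x (b i1), b i1⟫))
          ≤ c⁻¹ * (Real.log Λ * c) := mul_le_mul_of_nonneg_left hle (inv_nonneg.mpr hc.le)
        _ = Real.log Λ := by field_simp
    have hgap : Real.exp (μ i0 - μ i1) ≤ Λ := by
      calc Real.exp (μ i0 - μ i1) ≤ Real.exp (Real.log Λ) := Real.exp_le_exp.mpr hgaplog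
        _ = Λ := Real.exp_log hΛpos
    intro ξ
    constructor
    · have key : Λ⁻¹ * Real.exp (μ i0) ≤ Real.exp (μ i1) := by
        rw [inv_mul_le_iff₀ hΛpos]
        calc Real.exp (μ i0) = Real.exp (μ i0 - μ i1) * Real.exp (μ i1) := by
              rw [← Real.exp_add, sub_add_cancel]
          _ ≤ Λ * Real.exp (μ i1) := mul_le_mul_of_nonneg_right hgap (Real.exp_pos _).le
      calc Λ⁻¹ * ‖P‖ * ‖ξ‖ = (Λ⁻¹ * Real.exp (μ i0)) * ‖ξ‖ := by rw [hPnorm]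
        _ ≤ Real.exp (μ i1) * ‖ξ‖ := mul_le_mul_of_nonneg_right key (norm_nonneg _)
        _ ≤ ‖P ξ‖ := hlb ξ
    · exact P.le_opNorm ξ
end

section
/- Let G, H ∈ 𝒩 with κ := sup_{t≥0} H(t)/(G(t) + G(t)^{1+α/n}) < ∞, let a ∈ C^{0,α}(B_r) with a ≥ 0, r ≤ 1, and suppose sup_{B_r} a ≤ 4[a]_α r^α. Then for every nonnegative measurable f on B_r and every θ ∈ (0,1), the pointwise bound Ψ(x,t) := G(t) + a(x)H(t) satisfies: ⨍_{B_r} Ψ(x, f(x)) dx ≤ c ⨍_{B_r} G(f) dx + c κ r^α ⨍_{B_r} G(f)^{1+α/n} dx, for a constant c depending only on [a]_α, κ, and the indices of G and H. -/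
open Set Filter MeasureTheory Metric

/-- A Young function of class 𝒩: `Φ ∈ C¹([0,∞)) ∩ C²((0,∞))` is convex and increasing on
`[0,∞)`, `Φ(0) = 0`, `Φ(t) → ∞` as `t → ∞`, and `i ≤ tΦ''(t)/Φ'(t) ≤ s` for all `t > 0`,
where `0 < i ≤ s`.  The functions `Φ'` and `Φ''` are the first and second derivatives. -/
structure IsNFun (Φ Φ' Φ'' : ℝ → ℝ) (i s : ℝ) : Prop where
  i_pos : 0 < i
  i_le_s : i ≤ s
  hasDeriv : ∀ t ∈ Ici (0:ℝ), HasDerivWithinAt Φ (Φ' t) (Ici 0) t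
  derivCont : ContinuousOn Φ' (Ici 0)
  hasDeriv2 : ∀ t ∈ Ioi (0:ℝ), HasDerivAt Φ' (Φ'' t) t
  deriv2Cont : ContinuousOn Φ'' (Ioi 0)
  convexOn : ConvexOn ℝ (Ici 0) Φ
  monoOn : MonotoneOn Φ (Ici 0)
  map_zero : Φ 0 = 0
  tendsto_top : Tendsto Φ atTop atTop
  idx_lower : ∀ t ∈ Ioi (0:ℝ), i ≤ t * Φ'' t / Φ' t
  idx_upper : ∀ t ∈ Ioi (0:ℝ), t * Φ'' t / Φ' t ≤ s

/-- Let `G, H ∈ 𝒩` with `H(t) ≤ κ(G(t)+G(t)^{1+α/n})`, let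
`a ∈ C^{0,α}(B_r)` be nonnegative with `[a]_α ≤ Ha`, `r ≤ 1`, and
`sup_{B_r} a ≤ 4[a]_α r^α`.  Then for every nonnegative measurable `f`,
`⨍_{B_r} (G(f) + a H(f)) ≤ c ⨍_{B_r} G(f) + c κ r^α ⨍_{B_r} G(f)^{1+α/n}`,
with `c` depending only on `[a]_α`, `κ` and the indices of `G` and `H`. -/
theorem stmt11 (n : ℕ) (α κ Ha iG sG iH sH : ℝ) (hα : α ∈ Ioc (0:ℝ) 1)
    (hκ : 0 ≤ κ) (hHa : 0 ≤ Ha) :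
    ∃ c > (0:ℝ), ∀ (G G' G'' H H' H'' : ℝ → ℝ),
      IsNFun G G' G'' iG sG → IsNFun H H' H'' iH sH →
      (∀ t ≥ (0:ℝ), H t ≤ κ * (G t + G t ^ (1 + α / (n:ℝ)))) →
      ∀ (x₀ : EuclideanSpace ℝ (Fin n)) (r : ℝ), 0 < r → r ≤ 1 →
      ∀ (a : EuclideanSpace ℝ (Fin n) → ℝ),
        (∀ x ∈ ball x₀ r, 0 ≤ a x) →
        (∀ x ∈ ball x₀ r, ∀ y ∈ ball x₀ r, |a x - a y| ≤ Ha * dist x y ^ α) →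
        (∀ x ∈ ball x₀ r, a x ≤ 4 * Ha * r ^ α) →
      ∀ (f : EuclideanSpace ℝ (Fin n) → ℝ), (∀ x, 0 ≤ f x) → Measurable f →
        IntegrableOn (fun x => G (f x)) (ball x₀ r) →
        IntegrableOn (fun x => G (f x) ^ (1 + α / (n:ℝ))) (ball x₀ r) →
        ⨍ x in ball x₀ r, (G (f x) + a x * H (f x)) ≤
          c * ⨍ x in ball x₀ r, G (f x) +
            c * κ * r ^ α * ⨍ x in ball x₀ r, G (f x) ^ (1 + α / (n:ℝ)) := by

  refine ⟨1 + 4*Ha + 4*Ha*κ, by positivity, ?_⟩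
  intro G G' G'' H H' H'' hG hH hGH x₀ r hr hr1 a ha0 haH haB f hf hfm hint1 hint2
  have hα0 : 0 < α := hα.1
  have hrα : 0 < r ^ α := Real.rpow_pos_of_pos hr α
  have hrα1 : r ^ α ≤ 1 := Real.rpow_le_one hr.le hr1 hα0.le
  have hGf : ∀ x, 0 ≤ G (f x) := fun x => by
    have := hG.monoOn self_mem_Ici (hf x) (hf x)
    rwa [hG.map_zero] at this
  have hHf : ∀ x, 0 ≤ H (f x) := fun x => by
    have := hH.monoOn self_mem_Ici (hf x) (hf x)
    rwa [hH.map_zero] at this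
  have hGpf : ∀ x, 0 ≤ G (f x) ^ (1 + α / (n:ℝ)) := fun x =>
    Real.rpow_nonneg (hGf x) _
  -- pointwise bound on the ball
  have hpt : ∀ x ∈ ball x₀ r, G (f x) + a x * H (f x) ≤
      (1 + 4*Ha*κ*r^α) * G (f x) + (4*Ha*κ*r^α) * G (f x) ^ (1 + α / (n:ℝ)) := by
    intro x hx
    have h1 : a x * H (f x) ≤ (4*Ha*r^α) * H (f x) :=
      mul_le_mul_of_nonneg_right (haB x hx) (hHf x)
    have h2 : H (f x) ≤ κ * (G (f x) + G (f x) ^ (1 + α / (n:ℝ))) := hGH _ (hf x)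
    have h3 : (4*Ha*r^α) * H (f x) ≤ (4*Ha*r^α) * (κ * (G (f x) + G (f x) ^ (1 + α / (n:ℝ)))) :=
      mul_le_mul_of_nonneg_left h2 (by positivity)
    nlinarith [h1, h3]
  -- measurability
  have hGcont : ContinuousOn G (Ici 0) := fun t ht => (hG.hasDeriv t ht).continuousWithinAt
  have hHcont : ContinuousOn H (Ici 0) := fun t ht => (hH.hasDeriv t ht).continuousWithinAt
  have hGm : Measurable fun x => G (f x) := by
    have hc : Continuous fun t : ℝ => G (max t 0) :=
      hGcont.comp_continuous (continuous_id.max continuous_const) fun t => Set.mem_Ici.mpr (le_max_right _ _)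
    have he : (fun x => G (f x)) = fun x => G (max (f x) 0) :=
      funext fun x => by rw [max_eq_left (hf x)]
    rw [he]; exact hc.measurable.comp hfm
  have hHm : Measurable fun x => H (f x) := by
    have hc : Continuous fun t : ℝ => H (max t 0) :=
      hHcont.comp_continuous (continuous_id.max continuous_const) fun t => Set.mem_Ici.mpr (le_max_right _ _)
    have he : (fun x => H (f x)) = fun x => H (max (f x) 0) :=
      funext fun x => by rw [max_eq_left (hf x)]
    rw [he]; exact hc.measurable.comp hfm
  have hacont : ContinuousOn a (ball x₀ r) := by
    intro x hx
    rw [ContinuousWithinAt, tendsto_iff_dist_tendsto_zero]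
    have hb : ∀ y ∈ ball x₀ r, dist (a y) (a x) ≤ Ha * dist y x ^ α := fun y hy => by
      rw [Real.dist_eq]; exact haH y hy x hx
    have hten : Tendsto (fun y => Ha * dist y x ^ α) (nhdsWithin x (ball x₀ r)) (nhds 0) := by
      have h0 : Tendsto (fun y : EuclideanSpace ℝ (Fin n) => dist y x)
          (nhdsWithin x (ball x₀ r)) (nhds 0) := by
        have hcd : Continuous (fun y : EuclideanSpace ℝ (Fin n) => dist y x) :=
          Continuous.dist continuous_id (continuous_const : Continuous fun _ => x)
        simpa using (hcd.tendsto x).mono_left nhdsWithin_le_nhds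
      have h1 : Tendsto (fun d : ℝ => Ha * d ^ α) (nhds 0) (nhds (Ha * (0:ℝ) ^ α)) := by
        exact (Real.continuousAt_rpow_const 0 α (Or.inr hα0.le)).const_mul Ha
      have : Ha * (0:ℝ) ^ α = 0 := by rw [Real.zero_rpow (ne_of_gt hα0)]; ring
      rw [this] at h1
      exact h1.comp h0
    refine squeeze_zero' ?_ ?_ hten
    · exact eventually_nhdsWithin_of_forall fun y _ => dist_nonneg
    · exact eventually_nhdsWithin_of_forall hb
  have ham : AEStronglyMeasurable a (volume.restrict (ball x₀ r)) :=
    hacont.aestronglyMeasurable measurableSet_ball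
  -- integrability of RHS and LHS
  have hintR : IntegrableOn
      (fun x => (1 + 4*Ha*κ*r^α) * G (f x) + (4*Ha*κ*r^α) * G (f x) ^ (1 + α / (n:ℝ)))
      (ball x₀ r) := (hint1.const_mul _).add (hint2.const_mul _)
  have hintL : IntegrableOn (fun x => G (f x) + a x * H (f x)) (ball x₀ r) := by
    refine hintR.mono' (hGm.aestronglyMeasurable.add (ham.mul hHm.aestronglyMeasurable)) ?_
    filter_upwards [ae_restrict_mem measurableSet_ball] with x hx
    rw [Real.norm_eq_abs, abs_of_nonneg (by
      have := mul_nonneg (ha0 x hx) (hHf x)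
      linarith [hGf x])]
    exact hpt x hx
  -- integral inequality
  have hI : ∫ x in ball x₀ r, (G (f x) + a x * H (f x)) ≤
      ∫ x in ball x₀ r, ((1 + 4*Ha*κ*r^α) * G (f x) +
        (4*Ha*κ*r^α) * G (f x) ^ (1 + α / (n:ℝ))) :=
    setIntegral_mono_on hintL hintR measurableSet_ball hpt
  have hsplit : ∫ x in ball x₀ r, ((1 + 4*Ha*κ*r^α) * G (f x) +
      (4*Ha*κ*r^α) * G (f x) ^ (1 + α / (n:ℝ))) =
      (1 + 4*Ha*κ*r^α) * (∫ x in ball x₀ r, G (f x)) +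
      (4*Ha*κ*r^α) * (∫ x in ball x₀ r, G (f x) ^ (1 + α / (n:ℝ))) := by
    rw [integral_add (hint1.const_mul _) (hint2.const_mul _), integral_const_mul,
      integral_const_mul]
  -- pass to averages
  have hVne : (volume (ball x₀ r)).toReal ≠ 0 := by
    have h1 : 0 < volume (ball x₀ r) := measure_ball_pos _ _ hr
    have h2 : volume (ball x₀ r) ≠ ⊤ := measure_ball_lt_top.ne
    exact (ENNReal.toReal_pos h1.ne' h2).ne'
  have hV : 0 ≤ ((volume (ball x₀ r)).toReal)⁻¹ := inv_nonneg.mpr ENNReal.toReal_nonneg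
  have hIG : 0 ≤ ∫ x in ball x₀ r, G (f x) :=
    setIntegral_nonneg measurableSet_ball fun x _ => hGf x
  have hIGp : 0 ≤ ∫ x in ball x₀ r, G (f x) ^ (1 + α / (n:ℝ)) :=
    setIntegral_nonneg measurableSet_ball fun x _ => hGpf x
  have hEq : ∀ (g : EuclideanSpace ℝ (Fin n) → ℝ), (⨍ x in ball x₀ r, g x) =
      ((volume (ball x₀ r)).toReal)⁻¹ * ∫ x in ball x₀ r, g x := fun g => by
    rw [setAverage_eq, smul_eq_mul, measureReal_def]
  set V := ((volume (ball x₀ r)).toReal)⁻¹ with hVdef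
  have hVvol : V * (volume (ball x₀ r)).toReal = 1 := inv_mul_cancel₀ hVne
  set IG := ∫ x in ball x₀ r, G (f x) with hIGdef
  set IGp := ∫ x in ball x₀ r, G (f x) ^ (1 + α / (n:ℝ)) with hIGpdef
  have hchain : V * ∫ x in ball x₀ r, (G (f x) + a x * H (f x)) ≤
      (1 + 4*Ha*κ*r^α) * (V * IG) + (4*Ha*κ*r^α) * (V * IGp) := by
    have h := mul_le_mul_of_nonneg_left (hsplit ▸ hI) hV
    nlinarith [h]
  have hAG : 0 ≤ V * IG := mul_nonneg hV hIG
  have hAGp : 0 ≤ V * IGp := mul_nonneg hV hIGp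
  have hc1 : (1 + 4*Ha*κ*r^α) ≤ 1 + 4*Ha + 4*Ha*κ := by
    nlinarith [mul_nonneg (mul_nonneg hHa hκ) (sub_nonneg.mpr hrα1), hHa]
  have hc2 : (4*Ha*κ*r^α) ≤ (1 + 4*Ha + 4*Ha*κ) * ((1 + 4*Ha + 4*Ha*κ) * κ * r^α) := by
    nlinarith [mul_nonneg hκ hrα.le, mul_nonneg (mul_nonneg hHa hκ) hrα.le,
      mul_nonneg (mul_nonneg hHa (mul_nonneg hκ hκ)) hrα.le,
      mul_nonneg (mul_nonneg (mul_nonneg hHa hHa) hκ) hrα.le,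
      mul_nonneg (mul_nonneg (mul_nonneg hHa hHa) (mul_nonneg hκ hκ)) hrα.le]
  rw [hEq, hEq, hEq]
  have hCint : IntegrableOn
      (fun _ : EuclideanSpace ℝ (Fin n) => (1 + 4*Ha + 4*Ha*κ) * κ * r ^ α * (V * IGp))
      (ball x₀ r) := integrableOn_const measure_ball_lt_top.ne
  rw [integral_add hint1 hCint, setIntegral_const, smul_eq_mul, ← hIGdef, measureReal_def]
  have hE : (1 + 4*Ha + 4*Ha*κ) *
      (V * (IG + (volume (ball x₀ r)).toReal * ((1 + 4*Ha + 4*Ha*κ) * κ * r ^ α * (V * IGp)))) =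
      (1 + 4*Ha + 4*Ha*κ) * (V * IG) +
      ((1 + 4*Ha + 4*Ha*κ) * ((1 + 4*Ha + 4*Ha*κ) * κ * r ^ α)) * (V * IGp) := by
    have h1 : (volume (ball x₀ r)).toReal * V = 1 := by
      rw [mul_comm]; exact hVvol
    linear_combination ((1 + 4*Ha + 4*Ha*κ) * ((1 + 4*Ha + 4*Ha*κ) * κ * r ^ α * (V * IGp))) * h1
  rw [hE]
  have h4 : (1 + 4*Ha*κ*r^α) * (V * IG) ≤ (1 + 4*Ha + 4*Ha*κ) * (V * IG) :=
    mul_le_mul_of_nonneg_right hc1 hAG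
  have h5 : (4*Ha*κ*r^α) * (V * IGp) ≤
      ((1 + 4*Ha + 4*Ha*κ) * ((1 + 4*Ha + 4*Ha*κ) * κ * r ^ α)) * (V * IGp) := by
    have := mul_le_mul_of_nonneg_right hc2 hAGp
    linarith [this]
  linarith [hchain, h4, h5]
end
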